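/- For every integer n ≥ 9, λ1(A(K_n,H_1(n−5,1)^−)) > n/2 − 1. -/

import Mathlib

open Matrix

/-- The signed-complete-graph matrix `A(K_n, H^-)`: zero diagonal, `-1` on edges of `H`
(vertices labelled `1, …, n`, index `i : Fin n` corresponds to label `i+1`), `+1` otherwise. -/
noncomputable def signMat (n : ℕ) (E : ℕ → ℕ → Prop) : Matrix (Fin n) (Fin n) ℝ :=
  open scoped Classical in
  Matrix.of fun i j => if i = j then 0 else if E ((i : ℕ) + 1) ((j : ℕ) + 1) then -1 else 1

/-- The largest eigenvalue of a real matrix (the supremum of its spectrum). -/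
noncomputable def lam1 {n : ℕ} (M : Matrix (Fin n) (Fin n) ℝ) : ℝ :=
  sSup (spectrum ℝ M)

/-- `{i, j} = {a, b}` as an (unordered) edge. -/
def adjPair (a b i j : ℕ) : Prop := (i = a ∧ j = b) ∨ (i = b ∧ j = a)

/-- `U₁`: triangle `1 2 3` together with the pendant edges `{1, i}` for `4 ≤ i ≤ n`;
i.e. vertex `1` is adjacent to every other vertex, plus the edge `{2,3}`. -/
def U1edge (i j : ℕ) : Prop :=
  (i = 1 ∧ 2 ≤ j) ∨ (j = 1 ∧ 2 ≤ i) ∨ adjPair 2 3 i j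

/-- `D_{1,n-3}`: edges `{1,2}`, `{2,3}` and `{3,i}` for `4 ≤ i ≤ n`. -/
def Dedge (i j : ℕ) : Prop :=
  adjPair 1 2 i j ∨ adjPair 2 3 i j ∨ (i = 3 ∧ 4 ≤ j) ∨ (j = 3 ∧ 4 ≤ i)

/-- `U₂`: triangles `1 2 3` and `1 4 5` sharing vertex `1`, plus pendant edges `{1,i}`
for `6 ≤ i ≤ n`; i.e. vertex `1` adjacent to all, plus edges `{2,3}` and `{4,5}`. -/
def U2edge (i j : ℕ) : Prop :=
  (i = 1 ∧ 2 ≤ j) ∨ (j = 1 ∧ 2 ≤ i) ∨ adjPair 2 3 i j ∨ adjPair 4 5 i j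

/-- `H₁(s,t)` on `n = s + t + 4` vertices: triangle `1 2 3`, `s` pendant vertices
`5, …, s+4` at vertex `1`, vertex `4` adjacent to `1`, and `t` pendant vertices
`s+5, …, s+t+4` at vertex `4`. -/
def H1edge (s t : ℕ) (i j : ℕ) : Prop :=
  adjPair 1 2 i j ∨ adjPair 1 3 i j ∨ adjPair 2 3 i j ∨ adjPair 1 4 i j ∨
  (i = 1 ∧ 5 ≤ j ∧ j ≤ s + 4) ∨ (j = 1 ∧ 5 ≤ i ∧ i ≤ s + 4) ∨
  (i = 4 ∧ s + 5 ≤ j ∧ j ≤ s + t + 4) ∨ (j = 4 ∧ s + 5 ≤ i ∧ i ≤ s + t + 4)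

/-- `H₂(s,t)` on `n = s + t + 5` vertices: triangle `1 2 3`, edges `{1,4}` and `{4,5}`,
`s` pendant vertices `6, …, s+5` at vertex `4`, and `t` pendant vertices
`s+6, …, s+t+5` at vertex `5`. -/
def H2edge (s t : ℕ) (i j : ℕ) : Prop :=
  adjPair 1 2 i j ∨ adjPair 1 3 i j ∨ adjPair 2 3 i j ∨ adjPair 1 4 i j ∨ adjPair 4 5 i j ∨
  (i = 4 ∧ 6 ≤ j ∧ j ≤ s + 5) ∨ (j = 4 ∧ 6 ≤ i ∧ i ≤ s + 5) ∨
  (i = 5 ∧ s + 6 ≤ j ∧ j ≤ s + t + 5) ∨ (j = 5 ∧ s + 6 ≤ i ∧ i ≤ s + t + 5)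

/-- `K_{1,s} ∪ t·P₂` on `n = s + 1 + 2t` vertices: star with center `1` and leaves
`2, …, s+1`, together with the `t` disjoint edges `{s+2k+2, s+2k+3}`, `0 ≤ k < t`. -/
def starMatchEdge (s t : ℕ) (i j : ℕ) : Prop :=
  (i = 1 ∧ 2 ≤ j ∧ j ≤ s + 1) ∨ (j = 1 ∧ 2 ≤ i ∧ i ≤ s + 1) ∨
  (∃ k, k < t ∧ adjPair (s + 2 * k + 2) (s + 2 * k + 3) i j)

/-- The quotient matrix `Q₃(s,t)`. -/
noncomputable def Q3 (s t : ℕ) : Matrix (Fin 6) (Fin 6) ℝ :=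
  !![0, -1, -1, -1, -(s : ℝ), (t : ℝ);
     -1, 0, -1, 1, (s : ℝ), (t : ℝ);
     -1, -1, 0, 1, (s : ℝ), (t : ℝ);
     -1, 1, 1, 0, (s : ℝ), -(t : ℝ);
     -1, 1, 1, 1, (s : ℝ) - 1, (t : ℝ);
     1, 1, 1, -1, (s : ℝ), (t : ℝ) - 1]

/-- The quotient matrix `Q₄(s,t)`. -/
noncomputable def Q4 (s t : ℕ) : Matrix (Fin 7) (Fin 7) ℝ :=
  !![0, -1, -1, -1, 1, (s : ℝ), (t : ℝ);
     -1, 0, -1, 1, 1, (s : ℝ), (t : ℝ);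
     -1, -1, 0, 1, 1, (s : ℝ), (t : ℝ);
     -1, 1, 1, 0, -1, -(s : ℝ), (t : ℝ);
     1, 1, 1, -1, 0, (s : ℝ), -(t : ℝ);
     1, 1, 1, -1, 1, (s : ℝ) - 1, (t : ℝ);
     1, 1, 1, 1, -1, (s : ℝ), (t : ℝ) - 1]

/-- for `n ≥ 9`, `λ₁(A(K_n,H₁(n−5,1)⁻)) > n/2 − 1`. -/

lemma rayleigh_le_lam1 {n : ℕ} (hn : 0 < n) (M : Matrix (Fin n) (Fin n) ℝ)
    (hM : M.IsHermitian) (x : Fin n → ℝ) :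
    x ⬝ᵥ (M *ᵥ x) ≤ lam1 M * (x ⬝ᵥ x) := by
  classical
  haveI : Nonempty (Fin n) := ⟨⟨0, hn⟩⟩
  set V : Matrix (Fin n) (Fin n) ℝ := (hM.eigenvectorUnitary : Matrix (Fin n) (Fin n) ℝ) with hV
  have hstar : ∀ A : Matrix (Fin n) (Fin n) ℝ, star A = Aᵀ := by
    intro A; ext i j; simp [Matrix.star_eq_conjTranspose, Matrix.conjTranspose_apply]
  have hVmem := hM.eigenvectorUnitary.2
  have hVVt : V * Vᵀ = 1 := by
    have := (Matrix.mem_unitaryGroup_iff).mp hVmem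
    rwa [hstar] at this
  have hyy : (Vᵀ *ᵥ x) ⬝ᵥ (Vᵀ *ᵥ x) = x ⬝ᵥ x := by
    rw [dotProduct_mulVec, vecMul_transpose, mulVec_mulVec, hVVt, one_mulVec]
  have hD : M = V * Matrix.diagonal hM.eigenvalues * Vᵀ := by
    have := hM.spectral_theorem
    rw [Unitary.conjStarAlgAut_apply, hstar] at this
    convert this using 3 <;> rfl
  have key : x ⬝ᵥ (M *ᵥ x)
      = ∑ i, hM.eigenvalues i * ((Vᵀ *ᵥ x) i * (Vᵀ *ᵥ x) i) := by
    conv_lhs => rw [hD, ← mulVec_mulVec, ← mulVec_mulVec]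
    rw [dotProduct_mulVec, ← mulVec_transpose, dotProduct]
    exact Finset.sum_congr rfl fun i _ => by rw [mulVec_diagonal]; ring
  set μ : ℝ := Finset.univ.sup' Finset.univ_nonempty hM.eigenvalues with hμ
  obtain ⟨i₀, -, hi₀⟩ := Finset.exists_mem_eq_sup' Finset.univ_nonempty hM.eigenvalues
  have hμspec : μ ∈ spectrum ℝ M := by
    rw [hμ, hi₀]
    exact hM.eigenvalues_mem_spectrum_real i₀
  have hμle : μ ≤ lam1 M :=
    le_csSup (Matrix.finite_spectrum M).bddAbove hμspec
  have hxx : (0:ℝ) ≤ x ⬝ᵥ x := by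
    rw [dotProduct]; exact Finset.sum_nonneg fun i _ => mul_self_nonneg _
  calc x ⬝ᵥ (M *ᵥ x) = ∑ i, hM.eigenvalues i * ((Vᵀ *ᵥ x) i * (Vᵀ *ᵥ x) i) := key
    _ ≤ ∑ i, μ * ((Vᵀ *ᵥ x) i * (Vᵀ *ᵥ x) i) := by
        refine Finset.sum_le_sum fun i _ => ?_
        exact mul_le_mul_of_nonneg_right (Finset.le_sup' _ (Finset.mem_univ i))
          (mul_self_nonneg _)
    _ = μ * ((Vᵀ *ᵥ x) ⬝ᵥ (Vᵀ *ᵥ x)) := by rw [dotProduct, Finset.mul_sum]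
    _ = μ * (x ⬝ᵥ x) := by rw [hyy]
    _ ≤ lam1 M * (x ⬝ᵥ x) := mul_le_mul_of_nonneg_right hμle hxx

theorem stmt9 (n : ℕ) (hn : 9 ≤ n) :
    lam1 (signMat n (H1edge (n - 5) 1)) > (n : ℝ) / 2 - 1 := by
  classical
  have hn0 : 0 < n := by omega
  set M := signMat n (H1edge (n - 5) 1) with hMdef
  have hM : M.IsHermitian := by
    have hadj : ∀ c d i j : ℕ, adjPair c d i j ↔ adjPair c d j i := by
      intro c d i j; unfold adjPair; tauto
    have hsymmE : ∀ a b : ℕ, H1edge (n-5) 1 a b ↔ H1edge (n-5) 1 b a := by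
      intro a b
      unfold H1edge
      rw [hadj 1 2 a b, hadj 1 3 a b, hadj 2 3 a b, hadj 1 4 a b]
      tauto
    ext i j
    simp only [Matrix.conjTranspose_apply, hMdef, signMat, Matrix.of_apply, star_trivial]
    by_cases h : i = j
    · simp [h]
    · have h' : ¬ j = i := fun hh => h hh.symm
      simp only [h, h', if_false]
      by_cases he : H1edge (n-5) 1 ((i:ℕ)+1) ((j:ℕ)+1)
      · rw [if_pos he, if_pos ((hsymmE _ _).mp he)]
      · rw [if_neg he, if_neg (fun hh => he ((hsymmE _ _).mp hh))]
  set S : Finset (Fin n) := (Finset.Ico 4 n).attachFin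
    (fun m hm => (Finset.mem_Ico.mp hm).2) with hS
  have hmemS : ∀ i : Fin n, i ∈ S ↔ 4 ≤ (i : ℕ) := by
    intro i; rw [hS, Finset.mem_attachFin, Finset.mem_Ico]
    exact ⟨fun h => h.1, fun h => ⟨h, i.isLt⟩⟩
  have hcard : S.card = n - 4 := by rw [hS, Finset.card_attachFin, Nat.card_Ico]
  set x : Fin n → ℝ := fun i => if i ∈ S then 1 else 0 with hx
  have hentry : ∀ i j : Fin n, i ∈ S → j ∈ S → M i j = if i = j then 0 else 1 := by
    intro i j hi hj
    rw [hmemS] at hi hj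
    by_cases h : i = j
    · simp [hMdef, signMat, h]
    · have hne : ¬ H1edge (n-5) 1 ((i:ℕ)+1) ((j:ℕ)+1) := by
        unfold H1edge adjPair; omega
      simp [hMdef, signMat, h, hne]
  have hxx : x ⬝ᵥ x = (S.card : ℝ) := by
    rw [dotProduct]
    have h1 : ∀ i : Fin n, x i * x i = if i ∈ S then (1:ℝ) else 0 := by
      intro i; by_cases h : i ∈ S <;> simp [hx, h]
    rw [Finset.sum_congr rfl fun i _ => h1 i, Finset.sum_ite_mem, Finset.univ_inter,
      Finset.sum_const, nsmul_eq_mul, mul_one]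
  have hMx : x ⬝ᵥ (M *ᵥ x) = (S.card : ℝ) * ((S.card : ℝ) - 1) := by
    rw [dotProduct]
    have hrow : ∀ i : Fin n, x i * (M *ᵥ x) i
        = if i ∈ S then ((S.card:ℝ) - 1) else 0 := by
      intro i
      by_cases hi : i ∈ S
      · have hmv : (M *ᵥ x) i = ∑ j ∈ S, M i j := by
          rw [Matrix.mulVec, dotProduct]
          have : ∀ j : Fin n, M i j * x j = if j ∈ S then M i j else 0 := by
            intro j; by_cases h : j ∈ S <;> simp [hx, h]
          rw [Finset.sum_congr rfl fun j _ => this j, Finset.sum_ite_mem, Finset.univ_inter]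
        have hsum : ∑ j ∈ S, M i j = (S.card:ℝ) - 1 := by
          have h2 : ∀ j ∈ S, M i j = 1 - (if i = j then (1:ℝ) else 0) := by
            intro j hj
            rw [hentry i j hi hj]
            split_ifs <;> ring
          rw [Finset.sum_congr rfl h2, Finset.sum_sub_distrib, Finset.sum_const,
            Finset.sum_ite_eq S i (fun _ => (1:ℝ)), if_pos hi, nsmul_eq_mul, mul_one]
        rw [hmv, hsum]; simp [hx, hi]
      · simp [hx, hi]
    rw [Finset.sum_congr rfl fun i _ => hrow i, Finset.sum_ite_mem, Finset.univ_inter,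
      Finset.sum_const, nsmul_eq_mul]
  have hray := rayleigh_le_lam1 hn0 M hM x
  rw [hxx, hMx] at hray
  have h9 : (9:ℝ) ≤ (n:ℝ) := by exact_mod_cast hn
  have hc : (S.card : ℝ) = (n:ℝ) - 4 := by
    rw [hcard, Nat.cast_sub (by omega : 4 ≤ n)]; norm_num
  have hcpos : (0:ℝ) < (S.card:ℝ) := by rw [hc]; linarith
  have h1 : (S.card:ℝ) - 1 ≤ lam1 M := by nlinarith
  rw [hc] at h1
  linarith
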